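/- For every q with 0 < q < 2, there exist constants C1, C2 > 0 (depending on q) such that for all β > 0, C1·exp(C1·β^(2/(2−q))) ≤ ∫_{-∞}^{∞} exp(β|x|^q − x²/2) dx ≤ C2·exp(C2·β^(2/(2−q))). -/

import Mathlib

open Real MeasureTheory

lemma aux_pow (q β : ℝ) (hq2 : q < 2) (hβ : 0 < β) :
    β * (β ^ (1/(2-q))) ^ q = β ^ (2/(2-q)) := by
  have h2q : (2:ℝ) - q ≠ 0 := by linarith
  calc β * (β ^ (1/(2-q))) ^ q = β ^ (1:ℝ) * β ^ (q/(2-q)) := by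
        rw [Real.rpow_one, ← Real.rpow_mul hβ.le]; ring_nf
    _ = β ^ ((1:ℝ) + q/(2-q)) := (Real.rpow_add hβ _ _).symm
    _ = β ^ (2/(2-q)) := by congr 1; field_simp; ring

lemma aux_sq (q β : ℝ) (hq2 : q < 2) (hβ : 0 < β) :
    (β ^ (1/(2-q))) ^ 2 = β ^ (2/(2-q)) := by
  have h2q : (2:ℝ) - q ≠ 0 := by linarith
  rw [← Real.rpow_natCast (β ^ (1/(2-q))) 2, ← Real.rpow_mul hβ.le]
  congr 1
  push_cast
  ring

lemma aux_young (q β x : ℝ) (hq0 : 0 < q) (hq2 : q < 2) (hβ : 0 < β) :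
    β * |x| ^ q ≤ x ^ 2 / 4 + 4 ^ (q / (2 - q)) * β ^ (2 / (2 - q)) := by
  have h2q : (0:ℝ) < 2 - q := by linarith
  set t := |x| with ht_def
  have ht : 0 ≤ t := abs_nonneg x
  have hx2 : x ^ 2 = t ^ 2 := (sq_abs x).symm
  set T := (4*β) ^ (1/(2-q)) with hT_def
  have hT : 0 < T := Real.rpow_pos_of_pos (by linarith) _
  by_cases h : t ≤ T
  · have h1 : t ^ q ≤ T ^ q := Real.rpow_le_rpow ht h hq0.le
    have h2 : T ^ q = 4 ^ (q/(2-q)) * β ^ (q/(2-q)) := by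
      rw [hT_def, ← Real.rpow_mul (by linarith : (0:ℝ) ≤ 4*β),
        Real.mul_rpow (by norm_num) hβ.le]
      ring_nf
    have h4 : β * β ^ (q/(2-q)) = β ^ (2/(2-q)) := by
      calc β * β ^ (q/(2-q)) = β ^ (1:ℝ) * β ^ (q/(2-q)) := by rw [Real.rpow_one]
        _ = β ^ ((1:ℝ) + q/(2-q)) := (Real.rpow_add hβ _ _).symm
        _ = β ^ (2/(2-q)) := by congr 1; field_simp; ring
    have h5 : β * t ^ q ≤ β * T ^ q := mul_le_mul_of_nonneg_left h1 hβ.le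
    have h6 : β * T ^ q = 4 ^ (q/(2-q)) * β ^ (2/(2-q)) := by
      rw [h2, ← h4]; ring
    nlinarith [sq_nonneg x]
  · push_neg at h
    have ht0 : 0 < t := hT.trans h
    have h1 : 4 * β ≤ t ^ (2-q) := by
      have : T ^ (2-q) ≤ t ^ (2-q) := Real.rpow_le_rpow hT.le h.le h2q.le
      rwa [hT_def, one_div, Real.rpow_inv_rpow (by linarith) (by linarith)] at this
    have h2 : t ^ (2-q) * t ^ q = t ^ 2 := by
      rw [← Real.rpow_add ht0, ← Real.rpow_natCast t 2]
      norm_num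
    have h3 : (4*β) * t ^ q ≤ t ^ (2-q) * t ^ q :=
      mul_le_mul_of_nonneg_right h1 (Real.rpow_nonneg ht q)
    have h7 : 0 ≤ (4:ℝ) ^ (q/(2-q)) * β ^ (2/(2-q)) := by positivity
    nlinarith

theorem stmt_0 (q : ℝ) (hq0 : 0 < q) (hq2 : q < 2) :
    ∃ C₁ C₂ : ℝ, 0 < C₁ ∧ 0 < C₂ ∧ ∀ β : ℝ, 0 < β →
      C₁ * Real.exp (C₁ * β ^ (2 / (2 - q))) ≤
        ∫ x : ℝ, Real.exp (β * |x| ^ q - x ^ 2 / 2) ∧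
      (∫ x : ℝ, Real.exp (β * |x| ^ q - x ^ 2 / 2)) ≤
        C₂ * Real.exp (C₂ * β ^ (2 / (2 - q))) := by
  have h2q : (0:ℝ) < 2 - q := by linarith
  set A : ℝ := 4 ^ (q/(2-q)) with hA_def
  have hA : 0 < A := Real.rpow_pos_of_pos (by norm_num) _
  set K : ℝ := Real.sqrt (π / (1/4)) with hK_def
  have hK : 0 < K := Real.sqrt_pos.mpr (by positivity)
  refine ⟨1/100, max K A, by norm_num, lt_max_of_lt_left hK, fun β hβ => ?_⟩
  set s := β ^ (2/(2-q)) with hs_def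
  have hs0 : 0 < s := Real.rpow_pos_of_pos hβ _
  set t₀ := β ^ (1/(2-q)) with ht₀_def
  have ht₀ : 0 < t₀ := Real.rpow_pos_of_pos hβ _
  have ht₀s : t₀ ^ 2 = s := aux_sq q β hq2 hβ
  have hbq : β * t₀ ^ q = s := aux_pow q β hq2 hβ
  set f : ℝ → ℝ := fun x => Real.exp (β * |x| ^ q - x ^ 2 / 2) with hf_def
  set g : ℝ → ℝ := fun x => Real.exp (A * s) * Real.exp (-(1/4 : ℝ) * x ^ 2) with hg_def
  have hcont : Continuous f := by
    apply Continuous.rexp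
    exact (continuous_const.mul
      (continuous_abs.rpow_const fun x => Or.inr hq0.le)).sub
      ((continuous_pow 2).div_const 2)
  have hgint : Integrable g :=
    (integrable_exp_neg_mul_sq (show (0:ℝ) < 1/4 by norm_num)).const_mul _
  have hfle : ∀ x, f x ≤ g x := by
    intro x
    rw [hf_def, hg_def]
    simp only [← Real.exp_add]
    apply Real.exp_le_exp.mpr
    have := aux_young q β x hq0 hq2 hβ
    rw [← hA_def, ← hs_def] at this
    linarith
  have hfpos : ∀ x, 0 < f x := fun x => Real.exp_pos _
  have hfint : Integrable f := by
    refine hgint.mono' hcont.aestronglyMeasurable (Filter.Eventually.of_forall fun x => ?_)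
    rw [Real.norm_eq_abs, abs_of_pos (hfpos x)]
    exact hfle x
  constructor
  · -- lower bound
    have hkey : ∀ a : ℝ, 0 ≤ a → Real.exp (β * a ^ q - (a+1)^2/2) ≤ ∫ x : ℝ, f x := by
      intro a ha
      have h1 : Real.exp (β * a ^ q - (a+1)^2/2) * (volume (Set.Icc a (a+1))).toReal
          ≤ ∫ x in Set.Icc a (a+1), f x := by
        refine setIntegral_ge_of_const_le_real measurableSet_Icc (by simp) (fun x hx => ?_)
          hfint.integrableOn
        apply Real.exp_le_exp.mpr
        have hx0 : 0 ≤ x := ha.trans hx.1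
        have habs : |x| = x := abs_of_nonneg hx0
        have h2 : a ^ q ≤ |x| ^ q := by
          rw [habs]; exact Real.rpow_le_rpow ha hx.1 hq0.le
        have h3 : x ^ 2 ≤ (a+1)^2 := by nlinarith [hx.1, hx.2]
        nlinarith [mul_le_mul_of_nonneg_left h2 hβ.le]
      have h2 : (volume (Set.Icc a (a+1))).toReal = 1 := by
        rw [Real.volume_Icc]; norm_num
      have h3 : (∫ x in Set.Icc a (a+1), f x) ≤ ∫ x : ℝ, f x :=
        setIntegral_le_integral hfint (Filter.Eventually.of_forall fun x => (hfpos x).le)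
      rw [h2, mul_one] at h1
      exact h1.trans h3
    have hexp_half : (1/100 : ℝ) ≤ Real.exp (-(1/2)) := by
      have := Real.add_one_le_exp (-(1/2) : ℝ)
      linarith
    by_cases hc : t₀ < 4
    · -- small: use interval [0,1]
      have h1 := hkey 0 le_rfl
      have h2 : Real.exp (β * (0:ℝ) ^ q - (0+1)^2/2) = Real.exp (-(1/2)) := by
        rw [Real.zero_rpow hq0.ne']
        norm_num
      rw [h2] at h1
      have hs16 : s < 16 := by nlinarith
      have h3 : (1/100 : ℝ) * Real.exp (1/100 * s) ≤ Real.exp (-(1/2)) := by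
        have e1 : Real.exp (1/100 * s) ≤ Real.exp (16/100) :=
          Real.exp_le_exp.mpr (by linarith)
        have e2 : Real.exp (16/100 : ℝ) ≤ Real.exp 1 := Real.exp_le_exp.mpr (by norm_num)
        have e3 : Real.exp (1:ℝ) < 2.7182818286 := Real.exp_one_lt_d9
        have e4 : (1:ℝ)/2 ≤ Real.exp (-(1/2)) := by
          have := Real.add_one_le_exp (-(1/2) : ℝ); linarith
        nlinarith
      exact h3.trans h1
    · -- large: use interval [t₀, t₀+1]
      push_neg at hc
      have h1 := hkey t₀ ht₀.le
      rw [hbq] at h1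
      have h2 : (1/100 : ℝ) * Real.exp (1/100 * s) ≤ Real.exp (β * t₀ ^ q - (t₀+1)^2/2) := by
        rw [hbq]
        calc (1/100 : ℝ) * Real.exp (1/100 * s)
            ≤ Real.exp (-(1/2)) * Real.exp (s/4) := by
              apply mul_le_mul hexp_half (Real.exp_le_exp.mpr (by linarith))
                (Real.exp_pos _).le (Real.exp_pos _).le
          _ = Real.exp (-(1/2) + s/4) := (Real.exp_add _ _).symm
          _ ≤ Real.exp (s - (t₀+1)^2/2) := by
              apply Real.exp_le_exp.mpr
              nlinarith
      rw [hbq] at h2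
      exact h2.trans h1
  · -- upper bound
    have h1 : (∫ x : ℝ, f x) ≤ ∫ x : ℝ, g x := integral_mono hfint hgint hfle
    have h2 : (∫ x : ℝ, g x) = Real.exp (A * s) * K := by
      rw [hg_def]
      rw [integral_const_mul]
      rw [hK_def]
      congr 1
      exact integral_gaussian (1/4)
    have h3 : Real.exp (A * s) * K ≤ max K A * Real.exp (max K A * s) := by
      have e1 : Real.exp (A * s) ≤ Real.exp (max K A * s) :=
        Real.exp_le_exp.mpr (mul_le_mul_of_nonneg_right (le_max_right K A) hs0.le)
      calc Real.exp (A * s) * K ≤ Real.exp (max K A * s) * (max K A) :=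
            mul_le_mul e1 (le_max_left K A) hK.le (Real.exp_pos _).le
        _ = max K A * Real.exp (max K A * s) := mul_comm _ _
    rw [h2] at h1
    exact h1.trans h3
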